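/- With the qubit composition law above, the Markovianity condition factorizes: 1 − μ₃ − ε₃μ₃ = (1 − μ₁ − ε₁μ₁)(1 − μ₂ − ε₂μ₂). Consequently, if 1−μᵢ−εᵢμᵢ ≥ 0 and |cᵢ|² ≤ 1−μᵢ(1+εᵢ) for i=1,2, then |c₁c₂|² ≤ 1−μ₃(1+ε₃) where ε₃μ₃ is defined by the composition. -/

import Mathlib

/-- The Markovianity condition factorises under the qubit composition law:
`1 − μ₃ − ε₃μ₃ = (1 − μ₁ − ε₁μ₁)(1 − μ₂ − ε₂μ₂)`; consequently if
`1−μᵢ−εᵢμᵢ ≥ 0` and `|cᵢ|² ≤ 1−μᵢ(1+εᵢ)` for `i = 1,2`, then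
`|c₁c₂|² ≤ 1 − μ₃(1+ε₃)`. -/
theorem stmt_16 (μ₁ ε₁ μ₂ ε₂ : ℝ) (c₁ c₂ : ℂ) :
    (1 - (μ₁ + μ₂ - μ₁ * μ₂ * (1 + ε₁))
        - (ε₁ * μ₁ + ε₂ * μ₂ - μ₁ * μ₂ * (1 + ε₁) * ε₂)
      = (1 - μ₁ - ε₁ * μ₁) * (1 - μ₂ - ε₂ * μ₂)) ∧
    ((0 ≤ 1 - μ₁ - ε₁ * μ₁) → (0 ≤ 1 - μ₂ - ε₂ * μ₂) →
      ‖c₁‖ ^ 2 ≤ 1 - μ₁ * (1 + ε₁) → ‖c₂‖ ^ 2 ≤ 1 - μ₂ * (1 + ε₂) →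
      ‖c₁ * c₂‖ ^ 2 ≤
        1 - (μ₁ + μ₂ - μ₁ * μ₂ * (1 + ε₁))
          - (ε₁ * μ₁ + ε₂ * μ₂ - μ₁ * μ₂ * (1 + ε₁) * ε₂)) := by
  refine ⟨by ring, fun h1 h2 hc1 hc2 => ?_⟩
  have key : (1 : ℝ) - (μ₁ + μ₂ - μ₁ * μ₂ * (1 + ε₁))
      - (ε₁ * μ₁ + ε₂ * μ₂ - μ₁ * μ₂ * (1 + ε₁) * ε₂)
      = (1 - μ₁ - ε₁ * μ₁) * (1 - μ₂ - ε₂ * μ₂) := by ring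
  rw [key, norm_mul, mul_pow]
  have h1' : (1 : ℝ) - μ₁ * (1 + ε₁) = 1 - μ₁ - ε₁ * μ₁ := by ring
  have h2' : (1 : ℝ) - μ₂ * (1 + ε₂) = 1 - μ₂ - ε₂ * μ₂ := by ring
  rw [h1'] at hc1; rw [h2'] at hc2
  exact mul_le_mul hc1 hc2 (by positivity) h1
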